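/- Let Ψ be a finite set of 'band' predicates ψ, each of the form α_ψ · #a > β_ψ · (position index) with α_ψ, β_ψ positive integers and α_ψ/β_ψ ∈ (0,1) ∪ (1,∞) together with axis cases. Then there exists a constant ε (depending on k and Ψ) such that for every string w ∈ D_k and every ψ ∈ Ψ, either |{j ≤ i : w,j ⊨ ψ}| = i ± ε for all positions i with i > ε, or |{j ≤ i : w,j ⊨ ψ}| ≤ ε for all positions i. In other words, along strings of the bounded Dyck language D_k, each linear-threshold predicate comparing #a against a fraction of the position is eventually constantly true or constantly false, up to a bounded-size exceptional prefix. -/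

import Mathlib

open Computability

def dyck : ℕ → Language Bool
  | 0 => 1
  | k + 1 => ({[true]} * dyck k * {[false]})∗

def bandCount (w : List Bool) (a b i : ℕ) : ℕ :=
  ((Finset.Icc 1 i).filter (fun j => b * j < a * ((w.take j).count true))).card

def Bal (m : ℕ) (w : List Bool) : Prop :=
  2 * w.count true = w.length ∧
    ∀ j ≤ w.length, j ≤ 2 * ((w.take j).count true) ∧ 2 * ((w.take j).count true) ≤ j + m

lemma bal_nil (m : ℕ) : Bal m [] := by
  constructor
  · simp
  · intro j hj
    simp at hj
    subst hj
    simp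

lemma bal_append {m : ℕ} {u v : List Bool} (hu : Bal m u) (hv : Bal m v) :
    Bal m (u ++ v) := by
  obtain ⟨hu1, hu2⟩ := hu
  obtain ⟨hv1, hv2⟩ := hv
  constructor
  · simp only [List.count_append, List.length_append]
    omega
  · intro j hj
    rw [List.take_append, List.count_append]
    by_cases h : j ≤ u.length
    · rw [Nat.sub_eq_zero_of_le h]
      simpa using hu2 j h
    · push_neg at h
      rw [List.take_of_length_le (le_of_lt h)]
      have hj' : j - u.length ≤ v.length := by
        simp only [List.length_append] at hj; omega
      have := hv2 (j - u.length) hj'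
      omega

lemma bal_wrap {k : ℕ} {u : List Bool} (hu : Bal k u) :
    Bal (k + 1) (true :: (u ++ [false])) := by
  obtain ⟨hu1, hu2⟩ := hu
  have hc : ∀ s, ((u ++ [false]).take s).count true = (u.take s).count true := by
    intro s
    rw [List.take_append, List.count_append]
    have h0 : (([false] : List Bool).take (s - u.length)).count true = 0 := by
      rcases Nat.eq_zero_or_pos (s - u.length) with h | h
      · simp [h]
      · rw [List.take_of_length_le (by simp only [List.length_singleton]; omega)]
        simp
    omega
  constructor
  · simp only [List.count_cons, List.length_cons, List.count_append, List.length_append]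
    simp
    omega
  · intro j hj
    cases j with
    | zero => simp
    | succ s =>
      rw [List.take_succ_cons, List.count_cons]
      simp only [if_pos rfl, hc]
      simp at hj
      by_cases hs : s ≤ u.length
      · have := hu2 s hs
        simp only [beq_self_eq_true, if_true]
        omega
      · push_neg at hs
        rw [List.take_of_length_le (le_of_lt hs)]
        simp only [beq_self_eq_true, if_true]
        omega

lemma bal_dyck : ∀ k, ∀ w ∈ dyck k, Bal k w := by
  intro k
  induction k with
  | zero =>
    intro w hw
    rw [dyck, Language.mem_one] at hw
    subst hw
    exact bal_nil 0
  | succ k ih =>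
    intro w hw
    rw [dyck, Language.mem_kstar] at hw
    obtain ⟨L, rfl, hL⟩ := hw
    induction L with
    | nil => exact bal_nil _
    | cons y L ihL =>
      rw [List.flatten_cons]
      have hy := hL y List.mem_cons_self
      obtain ⟨x, hx, c, hcm, hxc⟩ := hy
      obtain ⟨t, ht, u, hu, htu⟩ := hx
      change t = [true] at ht; change c = [false] at hcm
      subst ht hcm
      have hy' : Bal (k+1) y := by
        rw [← hxc, ← htu]
        exact bal_wrap (ih u hu)
      exact bal_append hy' (ihL (fun z hz => hL z (List.mem_cons_of_mem _ hz)))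

theorem band_lemma (k : ℕ) (Ψ : Finset (ℕ × ℕ))
    (hΨ : ∀ p ∈ Ψ, 0 < p.1 ∧ 0 < p.2 ∧ p.1 ≠ p.2 ∧ p.1 ≠ 2 * p.2) :
    ∃ ε : ℕ, ∀ w ∈ dyck k, ∀ p ∈ Ψ,
      (∀ i, ε < i → i ≤ w.length → i ≤ bandCount w p.1 p.2 i + ε) ∨
      (∀ i ≤ w.length, bandCount w p.1 p.2 i ≤ ε) := by
  refine ⟨k * Ψ.sup Prod.fst, ?_⟩
  intro w hw p hp
  obtain ⟨ha, hb, hab, hab2⟩ := hΨ p hp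
  have hbal := bal_dyck k w hw
  rcases Nat.lt_or_ge (2 * p.2) p.1 with h | h
  · left
    intro i hi hilen
    have heq : (Finset.Icc 1 i).filter
        (fun j => p.2 * j < p.1 * ((w.take j).count true)) = Finset.Icc 1 i := by
      apply Finset.filter_true_of_mem
      intro j hj
      rw [Finset.mem_Icc] at hj
      have hb2 := (hbal.2 j (le_trans hj.2 hilen)).1
      have h1 : p.1 * j ≤ p.1 * (2 * ((w.take j).count true)) :=
        Nat.mul_le_mul_left _ hb2
      have h2 : (2 * p.2 + 1) * j ≤ p.1 * j := Nat.mul_le_mul_right _ h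
      nlinarith [hj.1]
    rw [bandCount, heq, Nat.card_Icc]
    omega
  · right
    have hlt : p.1 < 2 * p.2 := lt_of_le_of_ne h hab2
    intro i hilen
    have hsub : (Finset.Icc 1 i).filter
        (fun j => p.2 * j < p.1 * ((w.take j).count true)) ⊆ Finset.Icc 1 (p.1 * k) := by
      intro j hj
      rw [Finset.mem_filter, Finset.mem_Icc] at hj
      obtain ⟨⟨hj1, hj2⟩, hjp⟩ := hj
      have hb2 := (hbal.2 j (le_trans hj2 hilen)).2
      have h1 : p.1 * (2 * ((w.take j).count true)) ≤ p.1 * (j + k) :=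
        Nat.mul_le_mul_left _ hb2
      have h2 : (p.1 + 1) * j ≤ (2 * p.2) * j := Nat.mul_le_mul_right _ hlt
      rw [Finset.mem_Icc]
      refine ⟨hj1, ?_⟩
      nlinarith
    calc bandCount w p.1 p.2 i ≤ (Finset.Icc 1 (p.1 * k)).card := Finset.card_le_card hsub
      _ = p.1 * k := by rw [Nat.card_Icc]; omega
      _ ≤ k * Ψ.sup Prod.fst := by
          have : p.1 ≤ Ψ.sup Prod.fst := Finset.le_sup hp
          calc p.1 * k ≤ Ψ.sup Prod.fst * k := Nat.mul_le_mul_right _ this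
            _ = k * Ψ.sup Prod.fst := Nat.mul_comm _ _
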